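/- The synthesised monitors for external and internal choice coincide, ⟦p+q⟧ = ⟦p⊕q⟧; consequently the synthesis is not rejection complete: for p = ā.nil + b.nil we have p ⋢ ā.nil but not rej(ā.nil, ⟦p⟧). -/
import Mathlib


/-- Actions: names and co-names. -/
inductive Act : Type where
  | pos : Nat → Act
  | neg : Nat → Act
deriving DecidableEq

/-- Complementation (dual) of actions. -/
def Act.dual : Act → Act
  | .pos n => .neg n
  | .neg n => .pos n

/-- Server contracts. -/
inductive Srv : Type where
  | nil : Srv
  | pre : Act → Srv → Srv
  | ext : Srv → Srv → Srv
  | int : Srv → Srv → Srv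
deriving DecidableEq

/-- Client contracts (additionally with success `ok`). -/
inductive Cli : Type where
  | nil : Cli
  | ok : Cli
  | pre : Act → Cli → Cli
  | ext : Cli → Cli → Cli
  | int : Cli → Cli → Cli
deriving DecidableEq

/-- Server LTS; label `none` is the silent action τ. -/
inductive SStep : Srv → Option Act → Srv → Prop where
  | pre : ∀ (a : Act) (p : Srv), SStep (.pre a p) (some a) p
  | extL : ∀ {p ℓ p'} (q : Srv), SStep p ℓ p' → SStep (.ext p q) ℓ p'
  | extR : ∀ {q ℓ q'} (p : Srv), SStep q ℓ q' → SStep (.ext p q) ℓ q'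
  | intL : ∀ (p q : Srv), SStep (.int p q) none p
  | intR : ∀ (p q : Srv), SStep (.int p q) none q

/-- Client LTS; label `none` is τ.  `ok` and `nil` have no transitions. -/
inductive CStep : Cli → Option Act → Cli → Prop where
  | pre : ∀ (a : Act) (r : Cli), CStep (.pre a r) (some a) r
  | extL : ∀ {r ℓ r'} (s : Cli), CStep r ℓ r' → CStep (.ext r s) ℓ r'
  | extR : ∀ {s ℓ s'} (r : Cli), CStep s ℓ s' → CStep (.ext r s) ℓ s'
  | intL : ∀ (r s : Cli), CStep (.int r s) none r
  | intR : ∀ (r s : Cli), CStep (.int r s) none s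

/-- System τ-transitions for a client-server system `r ∥ p`. -/
inductive SysStep : Cli × Srv → Cli × Srv → Prop where
  | srv : ∀ {p p'} (r : Cli), SStep p none p' → SysStep (r, p) (r, p')
  | cli : ∀ {r r'} (p : Srv), CStep r none r' → SysStep (r, p) (r', p)
  | syn : ∀ {r r' p p' a}, CStep r (some (Act.dual a)) r' → SStep p (some a) p' →
      SysStep (r, p) (r', p')

/-- `Sat p r`: every maximal computation from `r ∥ p` is successful. -/
def Sat (p : Srv) (r : Cli) : Prop :=
  ∀ s q, Relation.ReflTransGen SysStep (r, p) (s, q) →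
    (¬ ∃ x, SysStep (s, q) x) → s = Cli.ok

/-- The server (subcontract) preorder. -/
def SrvPre (p q : Srv) : Prop := ∀ r, Sat p r → Sat q r

/-- Monitor verdicts: acceptance, rejection, inconclusive. -/
inductive Verd : Type where
  | yes : Verd
  | no : Verd
  | stp : Verd
deriving DecidableEq

/-- Monitors. -/
inductive Mon : Type where
  | verd : Verd → Mon
  | act : Act → Mon → Mon
  | nact : Act → Mon → Mon
  | choice : Mon → Mon → Mon
  | conj : Mon → Mon → Mon
deriving DecidableEq

/-- Monitor LTS (on visible actions only); verdicts persist. -/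
inductive MStep : Mon → Act → Mon → Prop where
  | verd : ∀ (v : Verd) (a : Act), MStep (.verd v) a (.verd v)
  | act : ∀ (a : Act) (m : Mon), MStep (.act a m) a m
  | nact : ∀ {b a : Act} (m : Mon), b ≠ a → MStep (.nact a m) b m
  | chL : ∀ {m a m'} (n : Mon), MStep m a m' → MStep (.choice m n) a m'
  | chR : ∀ {n a n'} (m : Mon), MStep n a n' → MStep (.choice m n) a n'
  | conj : ∀ {m a m' n n'}, MStep m a m' → MStep n a n' →
      MStep (.conj m n) a (.conj m' n')

/-- Instrumentation of a monitor over a server: `m ◁ p`. -/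
inductive IStep : Mon × Srv → Option Act → Mon × Srv → Prop where
  | mon : ∀ {m p a m' p'}, SStep p (some a) p' → MStep m a m' →
      IStep (m, p) (some a) (m', p')
  | ter : ∀ {m p a p'}, SStep p (some a) p' → (¬ ∃ m', MStep m a m') →
      IStep (m, p) (some a) (.verd .stp, p')
  | asy : ∀ {p p'} (m : Mon), SStep p none p' → IStep (m, p) none (m, p')

/-- Reachability along monitored computations. -/
def IReach : Mon × Srv → Mon × Srv → Prop :=
  Relation.ReflTransGen (fun x y => ∃ ℓ, IStep x ℓ y)

/-- Rejecting monitor states: conjunctions `no × ⋯ × no` (incl. the single `no`). -/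
inductive IsRej : Mon → Prop where
  | no : IsRej (.verd .no)
  | conj : ∀ {m n}, IsRej m → IsRej n → IsRej (.conj m n)

/-- `Rej p m`: some monitored computation from `m ◁ p` reaches a rejecting state. -/
def Rej (p : Srv) (m : Mon) : Prop :=
  ∃ m' p', IReach (m, p) (m', p') ∧ IsRej m'

/-- Monitor synthesis from a server specification. -/
def synth : Srv → Mon
  | .nil => .verd .stp
  | .pre a p => .choice (.nact a (.verd .no)) (.act a (synth p))
  | .ext p q => .conj (synth p) (synth q)
  | .int p q => .conj (synth p) (synth q)

/-- Traces (finite sequences of visible actions) of a server. -/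
inductive STrace : Srv → List Act → Prop where
  | nil : ∀ (p : Srv), STrace p []
  | tau : ∀ {p p' t}, SStep p none p' → STrace p' t → STrace p t
  | act : ∀ {p a p' t}, SStep p (some a) p' → STrace p' t → STrace p (a :: t)

/-- Traces of a monitored system. -/
inductive ITrace : Mon × Srv → List Act → Prop where
  | nil : ∀ (x : Mon × Srv), ITrace x []
  | tau : ∀ {x y t}, IStep x none y → ITrace y t → ITrace x t
  | act : ∀ {x a y t}, IStep x (some a) y → ITrace y t → ITrace x (a :: t)

/-- Weak visible transition: τ-steps followed by a visible action. -/
def WAct (p : Srv) (a : Act) (p' : Srv) : Prop :=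
  ∃ p₀, Relation.ReflTransGen (fun x y => SStep x none y) p p₀ ∧ SStep p₀ (some a) p'

/-- The synthesised monitors for external and internal choice coincide;
consequently the synthesis is not rejection complete: for
`p = ā.nil + b.nil` we have `p ⋢ ā.nil` but not `rej(ā.nil, ⟦p⟧)`. -/
theorem synthesis_not_complete :
    (∀ p q : Srv, synth (.ext p q) = synth (.int p q))
    ∧ ¬ SrvPre (.ext (.pre (.neg 0) .nil) (.pre (.pos 1) .nil)) (.pre (.neg 0) .nil)
    ∧ ¬ Rej (.pre (.neg 0) .nil)
        (synth (.ext (.pre (.neg 0) .nil) (.pre (.pos 1) .nil))) := by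
  refine ⟨fun p q => rfl, ?_, ?_⟩
  · -- not SrvPre
    intro h
    have hsat : Sat (.ext (.pre (.neg 0) .nil) (.pre (.pos 1) .nil))
        (Cli.pre (.neg 1) .ok) := by
      intro s q hreach hstuck
      have key : ∀ x, Relation.ReflTransGen SysStep
          (Cli.pre (.neg 1) .ok, Srv.ext (.pre (.neg 0) .nil) (.pre (.pos 1) .nil)) x →
          x = (Cli.pre (.neg 1) .ok, Srv.ext (.pre (.neg 0) .nil) (.pre (.pos 1) .nil))
          ∨ x = (Cli.ok, Srv.nil) := by
        intro x hx
        induction hx with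
        | refl => left; rfl
        | tail hab hbc ih =>
          rcases ih with h1 | h1 <;> subst h1
          · right
            cases hbc with
            | srv _ hs => cases hs with
              | extL _ hs' => cases hs'
              | extR _ hs' => cases hs'
            | cli _ hc => cases hc
            | syn hc hs =>
              rename_i r' p' a
              cases a with
              | pos n =>
                cases hc
                cases hs with
                | extL _ hs' => cases hs'
                | extR _ hs' => cases hs'; rfl
              | neg n => cases hc
          · exfalso
            cases hbc with
            | srv _ hs => cases hs
            | cli _ hc => cases hc
            | syn hc hs => cases hc
      rcases key _ hreach with h1 | h1
      · exfalso
        apply hstuck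
        rw [show (s, q) = (Cli.pre (.neg 1) .ok,
            Srv.ext (.pre (.neg 0) .nil) (.pre (.pos 1) .nil)) from h1]
        exact ⟨(Cli.ok, Srv.nil),
          SysStep.syn (a := .pos 1) (CStep.pre (.neg 1) .ok)
            (SStep.extR _ (SStep.pre (.pos 1) .nil))⟩
      · exact (Prod.mk.injEq _ _ _ _ ▸ h1).1
    have hnot : ¬ Sat (.pre (.neg 0) .nil) (Cli.pre (.neg 1) .ok) := by
      intro hs
      have := hs (Cli.pre (.neg 1) .ok) (.pre (.neg 0) .nil)
        Relation.ReflTransGen.refl ?_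
      · exact Cli.noConfusion this
      · rintro ⟨x, hx⟩
        cases hx with
        | srv _ hs' => cases hs'
        | cli _ hc => cases hc
        | syn hc hs' =>
          cases hs' with
          | pre => cases hc
    exact hnot (h _ hsat)
  · -- not Rej
    rintro ⟨m', p', hreach, hrej⟩
    have key : ∀ x, IReach
        (synth (.ext (.pre (.neg 0) .nil) (.pre (.pos 1) .nil)), Srv.pre (.neg 0) .nil) x →
        x = (synth (.ext (.pre (.neg 0) .nil) (.pre (.pos 1) .nil)), Srv.pre (.neg 0) .nil)
        ∨ x = (Mon.conj (.verd .stp) (.verd .no), Srv.nil) := by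
      intro x hx
      induction hx with
      | refl => left; rfl
      | tail hab hbc ih =>
        rcases ih with h1 | h1 <;> subst h1
        · rcases hbc with ⟨ℓ, hst⟩
          cases hst with
          | mon hs hm =>
            cases hs
            right
            cases hm with
            | conj hm1 hm2 =>
              cases hm1 with
              | chL _ h' => cases h' with
                | nact _ hne => exact absurd rfl hne
              | chR _ h' =>
                cases h'
                cases hm2 with
                | chL _ h'' =>
                  cases h''
                  rfl
                | chR _ h'' => cases h''
          | ter hs hno =>
            cases hs
            exact absurd ⟨_, MStep.conj
              (MStep.chR _ (MStep.act (.neg 0) _))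
              (MStep.chL _ (MStep.nact _ (by simp)))⟩ hno
          | asy _ hs => cases hs
        · exfalso
          rcases hbc with ⟨ℓ, hst⟩
          cases hst with
          | mon hs _ => cases hs
          | ter hs _ => cases hs
          | asy _ hs => cases hs
    rcases key _ hreach with h1 | h1 <;>
      rw [Prod.mk.injEq] at h1 <;> rcases h1 with ⟨h1, -⟩ <;> subst h1
    · cases hrej with
      | conj ha hb => cases ha
    · cases hrej with
      | conj ha hb => cases ha
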